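/- Fix $d \geq 2$ and let $h(a) = \theta_{d-1}\int_0^a (1-y^2)^{(d-1)/2}\,dy$ for $a \in [0,1]$. Let $j \in \mathbb{Z}_{\geq 0}$, $\alpha_0 > 0$ and $\varepsilon \in (0,1)$. Then as $s \to \infty$, $$\theta_{d-1}\int_0^1 e^{-s h(a)} (\alpha_0 + h(a))^{j} \Big(1 + \frac{j}{s(\alpha_0 + h(a))}\Big)\, da = \alpha_0^{j} s^{-1} + 2 j \alpha_0^{j-1} s^{-2} + O(s^{\varepsilon-3}).$$ -/

import Mathlib

open MeasureTheory Metric Set Real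

/-- θ_n, the Lebesgue volume of the unit Euclidean ball in ℝ^n. -/
noncomputable def ubv (n : ℕ) : ℝ :=
  (volume (Metric.ball (0 : EuclideanSpace ℝ (Fin n)) 1)).toReal

/-- The slab-volume function `h(a) = θ_{d-1} ∫_0^a (1-y²)^{(d-1)/2} dy`. -/
noncomputable def hSlab (d : ℕ) (a : ℝ) : ℝ :=
  ubv (d-1) * ∫ y in (0:ℝ)..a, (1 - y^2) ^ (((d:ℝ) - 1)/2)

lemma ubv_pos (n : ℕ) : 0 < ubv n := by
  unfold ubv
  refine ENNReal.toReal_pos ?_ measure_ball_lt_top.ne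
  exact (Metric.measure_ball_pos volume (0 : EuclideanSpace ℝ (Fin n)) one_pos).ne'

lemma sq_le_four_exp (x : ℝ) (hx : 0 ≤ x) : x^2 ≤ 4 * Real.exp x := by
  have h1 : Real.exp (x/2) * Real.exp (x/2) = Real.exp x := by
    rw [← Real.exp_add]; ring_nf
  have h2 := Real.add_one_le_exp (x/2)
  nlinarith

lemma exp_neg_le_cube (y : ℝ) (hy : 0 < y) : Real.exp (-y) ≤ 27 / y^3 := by
  have h1 : Real.exp (y/3) * Real.exp (y/3) * Real.exp (y/3) = Real.exp y := by
    rw [← Real.exp_add, ← Real.exp_add]; ring_nf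
  have h2 := Real.add_one_le_exp (y/3)
  have hc : (y/3)^3 ≤ Real.exp (y/3)^3 :=
    pow_le_pow_left₀ (by positivity) (by linarith) 3
  have h3 : y^3/27 ≤ Real.exp y := by nlinarith [Real.exp_pos (y/3)]
  rw [Real.exp_neg, inv_le_comm₀ (Real.exp_pos y) (by positivity), inv_div]
  exact h3

lemma hasDerivAt_exp_neg (s x : ℝ) :
    HasDerivAt (fun t => Real.exp (-(s*t))) (Real.exp (-(s*x)) * (-s)) x := by
  have h : HasDerivAt (fun t : ℝ => -(s*t)) (-s) x := by
    have h' := ((hasDerivAt_id x).const_mul s).neg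
    simp at h'
    exact h'
  exact h.exp

lemma integral_exp_neg_eq (s b : ℝ) (hs : s ≠ 0) :
    ∫ t in (0:ℝ)..b, Real.exp (-(s*t)) = (1 - Real.exp (-(s*b)))/s := by
  have key : ∀ x ∈ Set.uIcc (0:ℝ) b,
      HasDerivAt (fun t => -Real.exp (-(s*t))/s) (Real.exp (-(s*x))) x := by
    intro x _
    have h := ((hasDerivAt_exp_neg s x).neg).div_const s
    refine h.congr_deriv ?_
    field_simp
  have hint : IntervalIntegrable (fun t => Real.exp (-(s*t))) volume 0 b :=
    (Real.continuous_exp.comp (by fun_prop)).intervalIntegrable _ _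
  rw [intervalIntegral.integral_eq_sub_of_hasDerivAt key hint]
  simp
  ring

lemma integral_exp_neg_le (s b : ℝ) (hs : 0 < s) :
    ∫ t in (0:ℝ)..b, Real.exp (-(s*t)) ≤ 1/s := by
  rw [integral_exp_neg_eq s b hs.ne']
  have := Real.exp_nonneg (-(s*b))
  gcongr
  linarith

lemma abs_integral_le_of_le (f g : ℝ → ℝ) (b : ℝ) (hb : 0 ≤ b)
    (hf : IntervalIntegrable f volume 0 b) (hg : IntervalIntegrable g volume 0 b)
    (h : ∀ x ∈ Set.Icc (0:ℝ) b, |f x| ≤ g x) :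
    |∫ x in (0:ℝ)..b, f x| ≤ ∫ x in (0:ℝ)..b, g x := by
  refine (intervalIntegral.abs_integral_le_integral_abs hb).trans ?_
  exact intervalIntegral.integral_mono_on hb hf.abs hg h

lemma ibp_step (α₀ s T : ℝ) (hα : 0 < α₀) (hs : 0 < s) (n : ℕ) :
    ∫ t in (0:ℝ)..T, Real.exp (-(s*t)) * (α₀+t)^n
      = α₀^n/s - Real.exp (-(s*T))*(α₀+T)^n/s
        + ((n:ℝ)/s) * ∫ t in (0:ℝ)..T, Real.exp (-(s*t))*(α₀+t)^(n-1) := by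
  have hexp : ∀ x : ℝ, HasDerivAt (fun t => Real.exp (-(s*t))) (Real.exp (-(s*x)) * (-s)) x := by
    intro x
    have h : HasDerivAt (fun t : ℝ => -(s*t)) (-s) x := by
      have h' := ((hasDerivAt_id x).const_mul s).neg
      simp at h'
      exact h'
    exact h.exp
  have hpow : ∀ x : ℝ, HasDerivAt (fun t : ℝ => (α₀+t)^n) ((n:ℝ)*(α₀+x)^(n-1)) x := by
    intro x
    have h' := ((hasDerivAt_id x).const_add α₀).pow n
    simp at h'
    exact h'
  have key : ∀ x ∈ Set.uIcc (0:ℝ) T,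
      HasDerivAt (fun t => -(Real.exp (-(s*t)) * (α₀+t)^n)/s)
        (Real.exp (-(s*x)) * (α₀+x)^n - ((n:ℝ)/s) * (Real.exp (-(s*x))*(α₀+x)^(n-1))) x := by
    intro x _
    have h := (((hexp x).mul (hpow x)).neg).div_const s
    refine h.congr_deriv ?_
    field_simp
    ring
  have c1 : Continuous fun t : ℝ => Real.exp (-(s*t)) * (α₀+t)^n := by fun_prop
  have c2 : Continuous fun t : ℝ => Real.exp (-(s*t)) * (α₀+t)^(n-1) := by fun_prop
  have hint : IntervalIntegrable
      (fun x => Real.exp (-(s*x)) * (α₀+x)^n - ((n:ℝ)/s) * (Real.exp (-(s*x))*(α₀+x)^(n-1)))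
      volume 0 T := by
    exact (c1.sub (continuous_const.mul c2)).intervalIntegrable _ _
  have h2 := intervalIntegral.integral_eq_sub_of_hasDerivAt key hint
  rw [intervalIntegral.integral_sub (g := fun t : ℝ => (n:ℝ)/s * (Real.exp (-(s*t)) * (α₀+t)^(n-1))) (c1.intervalIntegrable _ _)
    ((continuous_const.mul c2).intervalIntegrable _ _),
    intervalIntegral.integral_const_mul] at h2
  have : ∫ t in (0:ℝ)..T, Real.exp (-(s*t)) * (α₀+t)^n
      = -(Real.exp (-(s*T)) * (α₀+T)^n)/s - -(Real.exp (-(s*0)) * (α₀+0)^n)/s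
        + ((n:ℝ)/s) * ∫ t in (0:ℝ)..T, Real.exp (-(s*t))*(α₀+t)^(n-1) := by
    rw [← h2]; ring
  rw [this]
  simp
  ring

lemma An_bound (α₀ s T : ℝ) (hα : 0 < α₀) (hs : 0 < s) (hT : 0 ≤ T) (n : ℕ) :
    |∫ t in (0:ℝ)..T, Real.exp (-(s*t)) * (α₀+t)^n| ≤ (α₀+T)^n / s := by
  have c1 : Continuous fun t : ℝ => Real.exp (-(s*t)) * (α₀+t)^n := by fun_prop
  have c2 : Continuous fun t : ℝ => (α₀+T)^n * Real.exp (-(s*t)) := by fun_prop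
  have hTn : (0:ℝ) ≤ (α₀+T)^n := pow_nonneg (by linarith) n
  refine (abs_integral_le_of_le _ (fun t => (α₀+T)^n * Real.exp (-(s*t))) T hT
    (c1.intervalIntegrable _ _) (c2.intervalIntegrable _ _) ?_).trans ?_
  · intro x hx
    have hx0 : (0:ℝ) ≤ α₀ + x := by linarith [hx.1]
    rw [abs_mul, abs_of_nonneg (Real.exp_nonneg _), abs_of_nonneg (pow_nonneg hx0 n)]
    calc Real.exp (-(s*x)) * (α₀+x)^n
        ≤ Real.exp (-(s*x)) * (α₀+T)^n := by
          exact mul_le_mul_of_nonneg_left (pow_le_pow_left₀ hx0 (by linarith [hx.2]) n)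
            (Real.exp_nonneg _)
      _ = (α₀+T)^n * Real.exp (-(s*x)) := mul_comm _ _
  · rw [intervalIntegral.integral_const_mul]
    calc (α₀+T)^n * ∫ t in (0:ℝ)..T, Real.exp (-(s*t))
        ≤ (α₀+T)^n * (1/s) := mul_le_mul_of_nonneg_left (integral_exp_neg_le s T hs) hTn
      _ = (α₀+T)^n / s := by ring

lemma w_continuous (p : ℝ) (hp : 0 < p) : Continuous (fun y : ℝ => (1 - y^2) ^ p) := by
  rw [continuous_iff_continuousAt]
  intro x
  exact (Real.continuousAt_rpow_const _ _ (Or.inr hp.le)).comp (by fun_prop)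

lemma w_nonneg (p y : ℝ) (hy : y ∈ Set.Icc (0:ℝ) 1) : 0 ≤ (1 - y^2) ^ p :=
  Real.rpow_nonneg (by nlinarith [hy.1, hy.2]) p

lemma w_le_one (p y : ℝ) (hp : 0 ≤ p) (hy : y ∈ Set.Icc (0:ℝ) 1) : (1 - y^2) ^ p ≤ 1 :=
  Real.rpow_le_one (by nlinarith [hy.1, hy.2]) (by nlinarith [hy.1]) hp

lemma one_sub_w_le (p y : ℝ) (hp : 1/2 ≤ p) (hy : y ∈ Set.Icc (0:ℝ) 1) :
    1 - (1 - y^2) ^ p ≤ (max p 1) * y^2 := by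
  have hy2 : 0 ≤ y^2 := sq_nonneg y
  have hy2' : y^2 ≤ 1 := by nlinarith [hy.1, hy.2]
  rcases le_or_gt 1 p with h1 | h1
  · -- Bernoulli : 1 + p * (-y²) ≤ (1 + (-y²))^p
    have := one_add_mul_self_le_rpow_one_add (s := -y^2) (by linarith) (p := p) h1
    have hmax : max p 1 = p := max_eq_left h1
    rw [hmax]
    have heq : (1 + -y^2) = 1 - y^2 := by ring
    rw [heq] at this
    nlinarith
  · -- 1/2 ≤ p < 1 : (1-y²)^p ≥ (1-y²)^1 = 1-y² for base in (0,1]; base 0 case separate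
    have hmax : max p 1 = 1 := max_eq_right h1.le
    rw [hmax, one_mul]
    rcases eq_or_lt_of_le (by nlinarith [hy.1, hy.2] : (0:ℝ) ≤ 1 - y^2) with h0 | h0
    · rw [← h0, Real.zero_rpow (by linarith)]
      linarith
    · have := Real.rpow_le_rpow_of_exponent_ge h0 (by nlinarith [hy.1]) h1.le
      rw [Real.rpow_one] at this
      linarith

lemma w_lower (p y : ℝ) (hp : 0 ≤ p) (hy : y ∈ Set.Icc (0:ℝ) (1/2)) :
    ((3:ℝ)/4) ^ p ≤ (1 - y^2) ^ p := by
  apply Real.rpow_le_rpow (by norm_num) (by nlinarith [hy.1, hy.2]) hp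

lemma pow_div_identity (x s : ℝ) (hx : 0 < x) (hs : 0 < s) (j : ℕ) :
    x^j * (1 + (j:ℝ)/(s*x)) = x^j + (j:ℝ)*x^(j-1)/s := by
  cases j with
  | zero => simp
  | succ n =>
    have hxn : x ≠ 0 := hx.ne'
    have hsn : s ≠ 0 := hs.ne'
    simp only [Nat.add_sub_cancel]
    field_simp
    ring
noncomputable def wfun (p y : ℝ) : ℝ := (1 - y^2) ^ p

noncomputable def Hfun (p a : ℝ) : ℝ := ∫ y in (0:ℝ)..a, wfun p y

lemma wfun_continuous (p : ℝ) (hp : 0 < p) : Continuous (wfun p) := by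
  unfold wfun
  rw [continuous_iff_continuousAt]
  intro x
  exact (Real.continuousAt_rpow_const _ _ (Or.inr hp.le)).comp (by fun_prop)

lemma wfun_nonneg (p y : ℝ) (hy : y ∈ Set.Icc (0:ℝ) 1) : 0 ≤ wfun p y :=
  Real.rpow_nonneg (by nlinarith [hy.1, hy.2]) p

lemma wfun_le_one (p y : ℝ) (hp : 0 ≤ p) (hy : y ∈ Set.Icc (0:ℝ) 1) : wfun p y ≤ 1 :=
  Real.rpow_le_one (by nlinarith [hy.1, hy.2]) (by nlinarith [hy.1]) hp

lemma one_sub_wfun_le (p y : ℝ) (hp : 1/2 ≤ p) (hy : y ∈ Set.Icc (0:ℝ) 1) :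
    1 - wfun p y ≤ (max p 1) * y^2 := by
  unfold wfun
  have hy2 : 0 ≤ y^2 := sq_nonneg y
  have hy2' : y^2 ≤ 1 := by nlinarith [hy.1, hy.2]
  rcases le_or_gt 1 p with h1 | h1
  · have := one_add_mul_self_le_rpow_one_add (s := -y^2) (by linarith) (p := p) h1
    have hmax : max p 1 = p := max_eq_left h1
    rw [hmax]
    have heq : (1 + -y^2) = 1 - y^2 := by ring
    rw [heq] at this
    nlinarith
  · have hmax : max p 1 = 1 := max_eq_right h1.le
    rw [hmax, one_mul]
    rcases eq_or_lt_of_le (by nlinarith [hy.1, hy.2] : (0:ℝ) ≤ 1 - y^2) with h0 | h0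
    · rw [← h0, Real.zero_rpow (by linarith)]
      linarith
    · have := Real.rpow_le_rpow_of_exponent_ge h0 (by nlinarith [hy.1]) (le_of_lt h1)
      rw [Real.rpow_one] at this
      linarith

lemma wfun_lower (p y : ℝ) (hp : 0 ≤ p) (hy : y ∈ Set.Icc (0:ℝ) (1/2)) :
    ((3:ℝ)/4) ^ p ≤ wfun p y := by
  apply Real.rpow_le_rpow (by norm_num) (by nlinarith [hy.1, hy.2]) hp

lemma wfun_intervalIntegrable (p : ℝ) (hp : 0 < p) (a b : ℝ) :
    IntervalIntegrable (wfun p) MeasureTheory.volume a b :=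
  (wfun_continuous p hp).intervalIntegrable a b

lemma Hfun_hasDerivAt (p : ℝ) (hp : 0 < p) (a : ℝ) : HasDerivAt (Hfun p) (wfun p a) a :=
  intervalIntegral.integral_hasDerivAt_right (wfun_intervalIntegrable p hp 0 a)
    ((wfun_continuous p hp).stronglyMeasurable.stronglyMeasurableAtFilter)
    (wfun_continuous p hp).continuousAt

lemma Hfun_continuous (p : ℝ) (hp : 0 < p) : Continuous (Hfun p) := by
  rw [continuous_iff_continuousAt]
  exact fun a => (Hfun_hasDerivAt p hp a).continuousAt

lemma Hfun_zero (p : ℝ) : Hfun p 0 = 0 := intervalIntegral.integral_same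

lemma Hfun_mono (p : ℝ) (hp : 0 < p) {a b : ℝ} (ha : 0 ≤ a) (hab : a ≤ b) (hb : b ≤ 1) :
    Hfun p a ≤ Hfun p b := by
  have hdiff : Hfun p b - Hfun p a = ∫ y in a..b, wfun p y :=
    intervalIntegral.integral_interval_sub_left (wfun_intervalIntegrable p hp 0 b)
      (wfun_intervalIntegrable p hp 0 a)
  have hpos : 0 ≤ ∫ y in a..b, wfun p y := by
    apply intervalIntegral.integral_nonneg hab
    intro y hy
    exact wfun_nonneg p y ⟨le_trans ha hy.1, le_trans hy.2 hb⟩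
  linarith

lemma Hfun_nonneg (p : ℝ) (hp : 0 < p) {a : ℝ} (ha : a ∈ Set.Icc (0:ℝ) 1) : 0 ≤ Hfun p a := by
  have := Hfun_mono p hp le_rfl ha.1 ha.2
  rw [Hfun_zero] at this
  exact this

lemma Hfun_low (p : ℝ) (hp : 0 < p) {a : ℝ} (ha : a ∈ Set.Icc (0:ℝ) 1) :
    ((3:ℝ)/4)^p/2 * a ≤ Hfun p a := by
  have hq : 0 < ((3:ℝ)/4)^p := Real.rpow_pos_of_pos (by norm_num) p
  have Hconst : ∀ c ∈ Set.Icc (0:ℝ) (1/2:ℝ), ((3:ℝ)/4)^p * c ≤ Hfun p c := by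
    intro c hc
    have h1 : ∫ _y in (0:ℝ)..c, ((3:ℝ)/4)^p ≤ ∫ y in (0:ℝ)..c, wfun p y := by
      apply intervalIntegral.integral_mono_on hc.1 (intervalIntegrable_const)
        (wfun_intervalIntegrable p hp 0 c)
      intro y hy
      exact wfun_lower p y hp.le ⟨hy.1, le_trans hy.2 hc.2⟩
    simpa [Hfun, intervalIntegral.integral_const, smul_eq_mul, mul_comm] using h1
  rcases le_or_gt a (1/2) with hle | hgt
  · have h1 := Hconst a ⟨ha.1, hle⟩
    nlinarith [ha.1]
  · have h1 := Hconst (1/2) ⟨by norm_num, le_rfl⟩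
    have h2 : Hfun p (1/2) ≤ Hfun p a := Hfun_mono p hp (by norm_num) hgt.le ha.2
    nlinarith [ha.2]
set_option maxHeartbeats 2000000 in
theorem slab_aux (p θ : ℝ) (hp : 1/2 ≤ p) (hθ : 0 < θ) (j : ℕ) (α₀ : ℝ) (hα₀ : 0 < α₀) :
    ∃ C : ℝ, 0 ≤ C ∧ ∀ s : ℝ, 1 ≤ s →
      |θ * (∫ a in (0:ℝ)..1, Real.exp (-(s * (θ * Hfun p a))) * (α₀ + θ * Hfun p a)^j
            * (1 + (j:ℝ) / (s * (α₀ + θ * Hfun p a))))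
        - (α₀^j / s + 2 * (j:ℝ) * α₀^(j-1) / s^2)| ≤ C / s^3 := by
  have hp0 : 0 < p := lt_of_lt_of_le (by norm_num) hp
  have hwc := wfun_continuous p hp0
  have hHc := Hfun_continuous p hp0
  obtain ⟨q, hqdef⟩ : ∃ x : ℝ, x = ((3:ℝ)/4)^p := ⟨_, rfl⟩
  have hq : 0 < q := hqdef ▸ Real.rpow_pos_of_pos (by norm_num) p
  obtain ⟨T, hTdef⟩ : ∃ x : ℝ, x = θ * Hfun p 1 := ⟨_, rfl⟩
  have hH1 : q/2 ≤ Hfun p 1 := by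
    have := Hfun_low p hp0 (a := 1) ⟨by norm_num, le_rfl⟩
    linarith
  have hT0 : 0 < T := by
    rw [hTdef]; exact mul_pos hθ (lt_of_lt_of_le (half_pos hq) hH1)
  have hHub : ∀ a ∈ Set.Icc (0:ℝ) 1, θ * Hfun p a ≤ T := by
    intro a ha
    rw [hTdef]
    exact mul_le_mul_of_nonneg_left (Hfun_mono p hp0 ha.1 ha.2 le_rfl) hθ.le
  obtain ⟨δ, hδdef⟩ : ∃ x : ℝ, x = θ * q / 2 := ⟨_, rfl⟩
  have hδ : 0 < δ := by rw [hδdef]; exact div_pos (mul_pos hθ hq) two_pos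
  have hδa : ∀ a ∈ Set.Icc (0:ℝ) 1, δ * a ≤ θ * Hfun p a := by
    intro a ha
    have h1 := Hfun_low p hp0 ha
    have h2 := mul_le_mul_of_nonneg_left h1 hθ.le
    rw [hδdef, hqdef]
    linarith only [h2]
  obtain ⟨K, hKdef⟩ : ∃ x : ℝ, x = max p 1 := ⟨_, rfl⟩
  have hK : 0 < K := by rw [hKdef]; exact lt_of_lt_of_le one_pos (le_max_right _ _)
  obtain ⟨B, hBdef⟩ : ∃ x : ℝ, x = (1+α₀+T)^j := ⟨_, rfl⟩
  have hB : 0 < B := by rw [hBdef]; have : (0:ℝ) < 1+α₀+T := by linarith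
                        positivity
  have hBk : ∀ k : ℕ, k ≤ j → (α₀+T)^k ≤ B := by
    intro k hk
    rw [hBdef]
    calc (α₀+T)^k ≤ (1+α₀+T)^k := by
          apply pow_le_pow_left₀ (by linarith) (by linarith)
      _ ≤ (1+α₀+T)^j := pow_le_pow_right₀ (by linarith) hk
  obtain ⟨M, hMdef⟩ : ∃ x : ℝ, x = B + (j:ℝ) * B := ⟨_, rfl⟩
  have hM : 0 < M := by
    rw [hMdef]
    have := mul_nonneg (Nat.cast_nonneg (α := ℝ) j) hB.le
    linarith only [hB, this]
  obtain ⟨C1, hC1def⟩ : ∃ x : ℝ, x = 27*B/T^3 := ⟨_, rfl⟩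
  have hC1 : 0 < C1 := by rw [hC1def]; positivity
  obtain ⟨C3, hC3def⟩ : ∃ x : ℝ, x = 2*(j:ℝ)^2*B := ⟨_, rfl⟩
  have hC3 : 0 ≤ C3 := by rw [hC3def]; positivity
  obtain ⟨C4, hC4def⟩ : ∃ x : ℝ, x = 32*θ*K*M/δ^3 := ⟨_, rfl⟩
  have hC4 : 0 < C4 := by rw [hC4def]; positivity
  refine ⟨C1 + 2*(j:ℝ)*C1 + C3 + C4, by
    have h2j : (0:ℝ) ≤ 2*(j:ℝ)*C1 :=
      mul_nonneg (mul_nonneg (by norm_num) (Nat.cast_nonneg j)) hC1.le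
    linarith only [hC1, hC3, hC4, h2j], ?_⟩
  intro s hs1
  have hs0 : (0:ℝ) < s := lt_of_lt_of_le one_pos hs1
  have hsinv : 1/s ≤ 1 := by rw [div_le_one hs0]; exact hs1
  obtain ⟨ψ, hψdef⟩ : ∃ f : ℝ → ℝ, f = fun t => (α₀+t)^j + (j:ℝ)*(α₀+t)^(j-1)/s := ⟨_, rfl⟩
  have hψc : Continuous ψ := by rw [hψdef]; fun_prop
  obtain ⟨g, hgdef⟩ : ∃ f : ℝ → ℝ, f = fun t => Real.exp (-(s*t)) * ψ t := ⟨_, rfl⟩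
  have hgc : Continuous g := by rw [hgdef]; fun_prop
  have cont_h : Continuous (fun a => θ * Hfun p a) := continuous_const.mul hHc
  -- Step 1: rewrite integrand
  have step1 : (∫ a in (0:ℝ)..1,
        Real.exp (-(s * (θ * Hfun p a))) * (α₀ + θ * Hfun p a)^j
          * (1 + (j:ℝ) / (s * (α₀ + θ * Hfun p a))))
      = ∫ a in (0:ℝ)..1, g (θ * Hfun p a) := by
    apply intervalIntegral.integral_congr
    intro a ha
    rw [Set.uIcc_of_le (by norm_num : (0:ℝ) ≤ 1)] at ha
    have hx : 0 < α₀ + θ * Hfun p a := by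
      have h1 := mul_nonneg hθ.le (Hfun_nonneg p hp0 ha)
      linarith only [h1, hα₀]
    have hid := pow_div_identity (α₀ + θ * Hfun p a) s hx hs0 j
    simp only [hgdef, hψdef]
    rw [mul_assoc, hid]
  -- Step 2: decompose
  have int_wg : IntervalIntegrable (fun a => (θ * wfun p a) * g (θ * Hfun p a)) volume 0 1 :=
    ((continuous_const.mul hwc).mul (hgc.comp cont_h)).intervalIntegrable _ _
  have int_rg : IntervalIntegrable (fun a => (θ * (1 - wfun p a)) * g (θ * Hfun p a)) volume 0 1 :=
    ((continuous_const.mul (continuous_const.sub hwc)).mul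
      (hgc.comp cont_h)).intervalIntegrable _ _
  have step2 : θ * ∫ a in (0:ℝ)..1, g (θ * Hfun p a)
      = (∫ a in (0:ℝ)..1, (θ * wfun p a) * g (θ * Hfun p a))
        + ∫ a in (0:ℝ)..1, (θ * (1 - wfun p a)) * g (θ * Hfun p a) := by
    rw [← intervalIntegral.integral_add int_wg int_rg,
        ← intervalIntegral.integral_const_mul]
    apply intervalIntegral.integral_congr
    intro a _
    show θ * g (θ * Hfun p a)
      = (θ * wfun p a) * g (θ * Hfun p a) + (θ * (1 - wfun p a)) * g (θ * Hfun p a)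
    ring
  -- Step 3: substitution t = θ * Hfun p a
  have step3 : (∫ a in (0:ℝ)..1, (θ * wfun p a) * g (θ * Hfun p a))
      = ∫ t in (0:ℝ)..T, g t := by
    have hsub := intervalIntegral.integral_comp_smul_deriv
      (f := fun a => θ * Hfun p a) (f' := fun a => θ * wfun p a) (g := g)
      (a := (0:ℝ)) (b := (1:ℝ))
      (fun x _ => (Hfun_hasDerivAt p hp0 x).const_mul θ)
      ((continuous_const.mul hwc).continuousOn) hgc
    simp only [smul_eq_mul, Function.comp] at hsub
    rw [hsub, Hfun_zero, mul_zero, ← hTdef]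
  -- Step 4: split the main integral
  have cj : Continuous fun t : ℝ => Real.exp (-(s*t)) * (α₀+t)^j := by fun_prop
  have cj1 : Continuous fun t : ℝ => Real.exp (-(s*t)) * (α₀+t)^(j-1) := by fun_prop
  obtain ⟨A1, hA1def⟩ : ∃ x : ℝ, x = ∫ t in (0:ℝ)..T, Real.exp (-(s*t)) * (α₀+t)^j := ⟨_, rfl⟩
  obtain ⟨A2, hA2def⟩ : ∃ x : ℝ, x = ∫ t in (0:ℝ)..T, Real.exp (-(s*t)) * (α₀+t)^(j-1) := ⟨_, rfl⟩
  obtain ⟨A3, hA3def⟩ : ∃ x : ℝ, x = ∫ t in (0:ℝ)..T, Real.exp (-(s*t)) * (α₀+t)^(j-1-1) := ⟨_, rfl⟩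
  have step4 : (∫ t in (0:ℝ)..T, g t) = A1 + ((j:ℝ)/s) * A2 := by
    rw [hA1def, hA2def, ← intervalIntegral.integral_const_mul,
      ← intervalIntegral.integral_add (g := fun t : ℝ => (j:ℝ)/s * (Real.exp (-(s*t)) * (α₀+t)^(j-1))) (cj.intervalIntegrable _ _)
        ((continuous_const.mul cj1).intervalIntegrable _ _)]
    apply intervalIntegral.integral_congr
    intro t _
    simp only [hgdef, hψdef]
    ring
  have ibp1 : A1 = α₀^j/s - Real.exp (-(s*T))*(α₀+T)^j/s + ((j:ℝ)/s) * A2 := by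
    rw [hA1def, hA2def]; exact ibp_step α₀ s T hα₀ hs0 j
  have ibp2 : A2 = α₀^(j-1)/s - Real.exp (-(s*T))*(α₀+T)^(j-1)/s + (((j-1:ℕ)):ℝ)/s * A3 := by
    rw [hA2def, hA3def]; exact ibp_step α₀ s T hα₀ hs0 (j-1)
  -- error bounds
  have hX0 : 0 ≤ Real.exp (-(s*T)) := Real.exp_nonneg _
  have hXb : Real.exp (-(s*T)) ≤ (27/T^3)/s^3 := by
    have h1 := exp_neg_le_cube (s*T) (by positivity)
    calc Real.exp (-(s*T)) ≤ 27/(s*T)^3 := h1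
      _ = (27/T^3)/s^3 := by field_simp
  have hαT : (0:ℝ) < α₀ + T := by linarith only [hα₀, hT0]
  have hA3b : |A3| ≤ B/s := by
    rw [hA3def]
    refine (An_bound α₀ s T hα₀ hs0 hT0.le (j-1-1)).trans ?_
    have hb := hBk (j-1-1) (le_trans (Nat.sub_le _ _) (Nat.sub_le _ _))
    gcongr
  -- remainder pointwise bound
  have hpt : ∀ a ∈ Set.Icc (0:ℝ) 1,
      |(θ * (1 - wfun p a)) * g (θ * Hfun p a)|
        ≤ (θ*K*M*(16/(s*δ)^2)) * Real.exp (-((s*δ/2)*a)) := by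
    intro a ha
    have ha0 : (0:ℝ) ≤ a := ha.1
    have hw0 := wfun_nonneg p a ha
    have hw1 := wfun_le_one p a hp0.le ha
    have h1w := one_sub_wfun_le p a hp ha
    have hub := hHub a ha
    have hlb := hδa a ha
    have ht0 : (0:ℝ) ≤ θ * Hfun p a := mul_nonneg hθ.le (Hfun_nonneg p hp0 ha)
    obtain ⟨v, hv⟩ : ∃ x : ℝ, x = θ * Hfun p a := ⟨_, rfl⟩
    obtain ⟨u, hu⟩ : ∃ x : ℝ, x = wfun p a := ⟨_, rfl⟩
    rw [← hv] at hub hlb ht0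
    rw [← hu] at hw0 hw1 h1w
    rw [← hv, ← hu]
    rw [← hKdef] at h1w
    have hψb : |ψ v| ≤ M := by
      simp only [hψdef]
      have hv0 : (0:ℝ) ≤ α₀ + v := by linarith only [hα₀, ht0]
      have hvT : α₀ + v ≤ α₀ + T := by linarith only [hub]
      have e1 : (α₀ + v)^j ≤ B :=
        le_trans (pow_le_pow_left₀ hv0 hvT j) (hBk j le_rfl)
      have e2 : (α₀ + v)^(j-1) ≤ B :=
        le_trans (pow_le_pow_left₀ hv0 hvT (j-1)) (hBk (j-1) (Nat.sub_le _ _))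
      have e3 : (0:ℝ) ≤ (α₀ + v)^j := pow_nonneg hv0 _
      have e4 : (0:ℝ) ≤ (α₀ + v)^(j-1) := pow_nonneg hv0 _
      rw [abs_of_nonneg (by positivity)]
      have h5 : (j:ℝ)*(α₀ + v)^(j-1)/s ≤ (j:ℝ)*B := by
        calc (j:ℝ)*(α₀ + v)^(j-1)/s ≤ (j:ℝ)*(α₀ + v)^(j-1) :=
              div_le_self (by positivity) hs1
          _ ≤ (j:ℝ)*B := mul_le_mul_of_nonneg_left e2 (Nat.cast_nonneg j)
      rw [hMdef]
      linarith only [e1, h5]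
    have hexp : Real.exp (-(s * v)) ≤ Real.exp (-(s*δ*a)) := by
      apply Real.exp_le_exp.mpr
      have h := mul_le_mul_of_nonneg_left hlb hs0.le
      linarith only [h]
    have hsq : a^2 * Real.exp (-(s*δ*a)) ≤ 16/(s*δ)^2 * Real.exp (-(s*δ/2*a)) := by
      have h4 := sq_le_four_exp (s*δ*a/2) (by positivity)
      have hE : (0:ℝ) < Real.exp (s*δ*a/2) := Real.exp_pos _
      have hsplit : Real.exp (-(s*δ*a)) * Real.exp (s*δ*a/2) = Real.exp (-(s*δ/2*a)) := by
        rw [← Real.exp_add]; ring_nf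
      have ha2 : a^2 ≤ 16/(s*δ)^2 * Real.exp (s*δ*a/2) := by
        rw [div_mul_eq_mul_div, le_div_iff₀ (by positivity)]
        nlinarith only [h4]
      calc a^2 * Real.exp (-(s*δ*a))
          ≤ (16/(s*δ)^2 * Real.exp (s*δ*a/2)) * Real.exp (-(s*δ*a)) :=
            mul_le_mul_of_nonneg_right ha2 (Real.exp_nonneg _)
        _ = 16/(s*δ)^2 * (Real.exp (-(s*δ*a)) * Real.exp (s*δ*a/2)) := by ring
        _ = 16/(s*δ)^2 * Real.exp (-(s*δ/2*a)) := by rw [hsplit]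
    have hgb : |g v| ≤ Real.exp (-(s*δ*a)) * M := by
      simp only [hgdef]
      rw [abs_mul, abs_of_nonneg (Real.exp_nonneg _)]
      exact mul_le_mul hexp hψb (abs_nonneg _) (Real.exp_nonneg _)
    calc |(θ * (1 - u)) * g v|
        = |θ * (1 - u)| * |g v| := abs_mul _ _
      _ ≤ (θ * (K * a^2)) * (Real.exp (-(s*δ*a)) * M) := by
          apply mul_le_mul _ hgb (abs_nonneg _)
          · positivity
          · rw [abs_of_nonneg (mul_nonneg hθ.le (by linarith only [hw1]))]
            exact mul_le_mul_of_nonneg_left h1w hθ.le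
      _ = (θ*K*M) * (a^2 * Real.exp (-(s*δ*a))) := by ring
      _ ≤ (θ*K*M) * (16/(s*δ)^2 * Real.exp (-(s*δ/2*a))) := by
          apply mul_le_mul_of_nonneg_left hsq (by positivity)
      _ = (θ*K*M*(16/(s*δ)^2)) * Real.exp (-((s*δ/2)*a)) := by ring
  have hRb : |∫ a in (0:ℝ)..1, (θ * (1 - wfun p a)) * g (θ * Hfun p a)| ≤ C4/s^3 := by
    have hce : Continuous (fun a : ℝ => (θ*K*M*(16/(s*δ)^2)) * Real.exp (-((s*δ/2)*a))) := by
      fun_prop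
    refine (abs_integral_le_of_le _ _ 1 (by norm_num) int_rg
      (hce.intervalIntegrable _ _) hpt).trans ?_
    rw [intervalIntegral.integral_const_mul]
    have hint := integral_exp_neg_le (s*δ/2) 1 (by positivity)
    calc (θ*K*M*(16/(s*δ)^2)) * ∫ a in (0:ℝ)..1, Real.exp (-(s*δ/2*a))
        ≤ (θ*K*M*(16/(s*δ)^2)) * (1/(s*δ/2)) :=
          mul_le_mul_of_nonneg_left hint (by positivity)
      _ = C4/s^3 := by rw [hC4def]; field_simp; ring
  -- assembly
  rw [step1, step2, step3, step4]
  have hkey : A1 + ((j:ℝ)/s) * A2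
        + (∫ a in (0:ℝ)..1, (θ * (1 - wfun p a)) * g (θ * Hfun p a))
        - (α₀^j/s + 2*(j:ℝ)*α₀^(j-1)/s^2)
      = -(Real.exp (-(s*T))*(α₀+T)^j/s)
        + (-((2*(j:ℝ)/s^2)*(Real.exp (-(s*T))*(α₀+T)^(j-1))))
        + (2*(j:ℝ)*((j-1:ℕ):ℝ)/s^2)*A3
        + (∫ a in (0:ℝ)..1, (θ * (1 - wfun p a)) * g (θ * Hfun p a)) := by
    rw [ibp1, ibp2]
    field_simp
    ring
  rw [hkey]
  have b1 : |-(Real.exp (-(s*T))*(α₀+T)^j/s)| ≤ C1/s^3 := by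
    rw [abs_neg, abs_of_nonneg (div_nonneg (mul_nonneg hX0 (pow_nonneg hαT.le _)) hs0.le)]
    calc Real.exp (-(s*T))*(α₀+T)^j/s ≤ Real.exp (-(s*T))*(α₀+T)^j :=
          div_le_self (mul_nonneg hX0 (pow_nonneg hαT.le _)) hs1
      _ ≤ ((27/T^3)/s^3)*B :=
          mul_le_mul hXb (hBk j le_rfl) (pow_nonneg hαT.le _) (by positivity)
      _ = C1/s^3 := by rw [hC1def]; ring
  have hx2 : Real.exp (-(s*T))*(α₀+T)^(j-1) ≤ C1/s := by
    calc Real.exp (-(s*T))*(α₀+T)^(j-1) ≤ ((27/T^3)/s^3)*B :=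
          mul_le_mul hXb (hBk (j-1) (Nat.sub_le _ _)) (pow_nonneg hαT.le _) (by positivity)
      _ = C1/s^3 := by rw [hC1def]; ring
      _ ≤ C1/s := by
          apply div_le_div_of_nonneg_left hC1.le hs0
          have h := mul_nonneg (mul_nonneg hs0.le (sub_nonneg.mpr hs1))
            (by linarith only [hs0] : (0:ℝ) ≤ s + 1)
          nlinarith only [h]
  have b2 : |-((2*(j:ℝ)/s^2)*(Real.exp (-(s*T))*(α₀+T)^(j-1)))| ≤ 2*(j:ℝ)*C1/s^3 := by
    rw [abs_neg, abs_of_nonneg (by positivity : (0:ℝ) ≤ (2*(j:ℝ)/s^2)*(Real.exp (-(s*T))*(α₀+T)^(j-1)))]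
    calc (2*(j:ℝ)/s^2)*(Real.exp (-(s*T))*(α₀+T)^(j-1))
        ≤ (2*(j:ℝ)/s^2)*(C1/s) := mul_le_mul_of_nonneg_left hx2 (by positivity)
      _ = 2*(j:ℝ)*C1/s^3 := by ring
  have b3 : |(2*(j:ℝ)*((j-1:ℕ):ℝ)/s^2)*A3| ≤ C3/s^3 := by
    rw [abs_mul, abs_of_nonneg (by positivity : (0:ℝ) ≤ 2*(j:ℝ)*((j-1:ℕ):ℝ)/s^2)]
    have hj1 : ((j-1:ℕ):ℝ) ≤ (j:ℝ) := Nat.cast_le.mpr (Nat.sub_le j 1)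
    calc (2*(j:ℝ)*((j-1:ℕ):ℝ)/s^2)*|A3| ≤ (2*(j:ℝ)*(j:ℝ)/s^2)*(B/s) := by
          apply mul_le_mul _ hA3b (abs_nonneg _) (by positivity)
          gcongr
      _ = (2*(j:ℝ)^2*B)/s^3 := by ring
      _ = C3/s^3 := by rw [hC3def]
  have tri : ∀ x1 x2 x3 x4 : ℝ, |x1 + x2 + x3 + x4| ≤ |x1| + |x2| + |x3| + |x4| := by
    intro x1 x2 x3 x4
    calc |x1 + x2 + x3 + x4| ≤ |x1 + x2 + x3| + |x4| := abs_add_le _ _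
      _ ≤ (|x1 + x2| + |x3|) + |x4| := add_le_add (abs_add_le _ _) le_rfl
      _ ≤ ((|x1| + |x2|) + |x3|) + |x4| := by
          have := abs_add_le x1 x2
          linarith
  refine (tri _ _ _ _).trans ?_
  have hsum : (C1 + 2*(j:ℝ)*C1 + C3 + C4)/s^3
      = C1/s^3 + 2*(j:ℝ)*C1/s^3 + C3/s^3 + C4/s^3 := by ring
  rw [hsum]
  linarith only [b1, b2, b3, hRb]
/-- as `s → ∞`,
`θ_{d-1} ∫_0^1 e^{-s h(a)} (α₀+h(a))^j (1 + j/(s(α₀+h(a)))) da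
  = α₀^j s⁻¹ + 2 j α₀^{j-1} s⁻² + O(s^{ε-3})`. -/
theorem integral_exp_slab_asymptotics_corrected (d : ℕ) (hd : 2 ≤ d) (j : ℕ)
    (α₀ : ℝ) (hα₀ : 0 < α₀) (ε : ℝ) (hε : ε ∈ Set.Ioo (0:ℝ) 1) :
    ∃ C s₀ : ℝ, ∀ s ≥ s₀,
      |ubv (d-1) * (∫ a in (0:ℝ)..1,
          Real.exp (-(s * hSlab d a)) * (α₀ + hSlab d a)^j
            * (1 + (j:ℝ) / (s * (α₀ + hSlab d a))))
        - (α₀^j / s + 2 * (j:ℝ) * α₀^(j-1) / s^2)| ≤ C * s ^ (ε - 3) := by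
  obtain ⟨hε0, hε1⟩ := hε
  have hd2 : (2:ℝ) ≤ (d:ℝ) := by exact_mod_cast hd
  obtain ⟨C, hC, hbound⟩ := slab_aux (((d:ℝ)-1)/2) (ubv (d-1)) (by linarith)
    (ubv_pos (d-1)) j α₀ hα₀
  refine ⟨C, 1, ?_⟩
  intro s hs1
  have hs0 : (0:ℝ) < s := lt_of_lt_of_le one_pos hs1
  have hSlab_eq : ∀ a, hSlab d a = ubv (d-1) * Hfun (((d:ℝ)-1)/2) a := fun _ => rfl
  simp only [hSlab_eq]
  refine (hbound s hs1).trans ?_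
  have h1 : s ^ (-3:ℝ) ≤ s ^ (ε-3) := Real.rpow_le_rpow_of_exponent_le hs1 (by linarith)
  have h2 : s ^ (-3:ℝ) = 1 / s ^ 3 := by
    rw [Real.rpow_neg hs0.le, one_div]
    congr 1
    rw [← Real.rpow_natCast s 3]
    norm_num
  calc C / s^3 = C * (1/s^3) := by ring
    _ = C * s ^ (-3:ℝ) := by rw [h2]
    _ ≤ C * s ^ (ε-3) := mul_le_mul_of_nonneg_left h1 hC
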